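/- The counter storage with zero-test Z+ cannot be deterministically simulated by any test-free storage type S; in particular, Z+ is not simulated by C^k(C) or by C^k_inv(C) for any k, where C is the unary pushdown operator without tests. Concretely: there is a deterministic Z+-automaton recognizing { aⁿbⁿ : n ∈ ℕ }, but no deterministic S-automaton with S test-free recognizes this language. -/

import Mathlib

/-! Storage types, test-freeness, and deterministic automata with storage. -/

namespace Stor

/-- A (finitely encoded) storage type: storage configurations `X`, a finite
index set `T` of tests, a finite index set `F` of partial operations, and an
initial configuration. -/
structure StorageType (X T F : Type) where
  test : T → X → Bool
  op : F → X → Option X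
  x0 : X

/-- A storage type is test-free if every test is constant on all storage
configurations. -/
def TestFree {X T F : Type} (S : StorageType X T F) : Prop :=
  ∀ (t : T) (x y : X), S.test t x = S.test t y

/-- The vector of test results on a storage configuration. -/
def tv {X T F : Type} (S : StorageType X T F) (x : X) : T → Bool :=
  fun t => S.test t x

/-- A deterministic `S`-automaton with states `Q` over input alphabet `Γ`:
the (at most one) transition from a state on an input symbol depends on the
test results; acceptance may depend on the final state and test results. -/
structure DAut (X T F Q Γ : Type) where
  q0 : Q
  δ : Q → Γ → (T → Bool) → Option (F × Q)
  final : Q → (T → Bool) → Bool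

/-- One deterministic step on input symbol `γ` (undefined if no transition is
applicable or the storage operation is undefined). -/
def step {X T F Q Γ : Type} (S : StorageType X T F) (A : DAut X T F Q Γ)
    (c : Q × X) (γ : Γ) : Option (Q × X) :=
  match A.δ c.1 γ (tv S c.2) with
  | none => none
  | some (f, p) => (S.op f c.2).map (fun x' => (p, x'))

/-- The (partial) run of the automaton on an input word. -/
def runWord {X T F Q Γ : Type} (S : StorageType X T F) (A : DAut X T F Q Γ) :
    Q × X → List Γ → Option (Q × X)
  | c, [] => some c
  | c, γ :: w => (step S A c γ).bind (fun c' => runWord S A c' w)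

/-- The language recognized by a deterministic `S`-automaton. -/
def LangOf {X T F Q Γ : Type} (S : StorageType X T F) (A : DAut X T F Q Γ) :
    Set (List Γ) :=
  { w | ∃ c : Q × X, runWord S A (A.q0, S.x0) w = some c ∧
      A.final c.1 (tv S c.2) = true }

end Stor

/-- The storage type `Z+`: a counter with increment (`0`), decrement
(`1`, undefined at `0`), identity (`2`), and a zero-test. -/
def ZPlus : Stor.StorageType ℕ Unit (Fin 3) where
  test := fun _ n => decide (n = 0)
  op := fun i n =>
    if i = 0 then some (n + 1)
    else if i = 1 then (if n = 0 then none else some (n - 1))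
    else some n
  x0 := 0


/-! ### Auxiliary development -/

namespace Stor

lemma runWord_append {X T F Q Γ : Type} (S : StorageType X T F)
    (A : DAut X T F Q Γ) (u v : List Γ) :
    ∀ c, runWord S A c (u ++ v) = (runWord S A c u).bind (fun c' => runWord S A c' v) := by
  induction u with
  | nil => intro c; simp [runWord]
  | cons γ u ih =>
      intro c
      simp only [List.cons_append, runWord]
      cases step S A c γ with
      | none => simp
      | some c' => simp [ih]

/-- The projection of the run to states, valid for test-free storage. -/
def runB {X T F Q Γ : Type} (S : StorageType X T F) (A : DAut X T F Q Γ) :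
    Q → List Γ → Option Q
  | q, [] => some q
  | q, γ :: w =>
      match A.δ q γ (tv S S.x0) with
      | none => none
      | some (_, p) => runB S A p w

lemma run_proj {X T F Q Γ : Type} (S : StorageType X T F) (A : DAut X T F Q Γ)
    (hTF : TestFree S) :
    ∀ (w : List Γ) (q : Q) (x : X) (c : Q × X),
      runWord S A (q, x) w = some c → runB S A q w = some c.1 := by
  intro w
  induction w with
  | nil => intro q x c h; simp [runWord] at h; simp [runB, ← h]
  | cons γ w ih =>
      intro q x c h
      have htv : tv S x = tv S S.x0 := funext fun t => hTF t x S.x0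
      simp only [runWord, step, htv] at h
      simp only [runB]
      cases hδ : A.δ q γ (tv S S.x0) with
      | none => rw [hδ] at h; simp at h
      | some fp =>
          rcases fp with ⟨f, p⟩
          rw [hδ] at h
          cases hop : S.op f x with
          | none => simp [hop] at h
          | some x' =>
              simp [hop] at h
              simpa using ih p x' c h

end Stor

/-- The deterministic `Z+`-automaton for `{aⁿbⁿ}`:
state `false` reads `a = true`s (pushing), state `true` reads `b = false`s (popping). -/
def ZA : Stor.DAut ℕ Unit (Fin 3) Bool Bool where
  q0 := false
  δ := fun q γ _ =>
    match q, γ with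
    | false, true => some (0, false)
    | false, false => some (1, true)
    | true, true => none
    | true, false => some (1, true)
  final := fun _ t => t ()

lemma ZA_step_false_true (x : ℕ) :
    Stor.step ZPlus ZA (false, x) true = some (false, x + 1) := by
  simp [Stor.step, ZA, ZPlus, Stor.tv]

lemma ZA_step_false_false (x : ℕ) :
    Stor.step ZPlus ZA (false, x) false =
      (if x = 0 then none else some (true, x - 1)) := by
  by_cases h : x = 0 <;> simp [Stor.step, ZA, ZPlus, Stor.tv, h]

lemma ZA_step_true_true (x : ℕ) :
    Stor.step ZPlus ZA (true, x) true = none := by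
  simp [Stor.step, ZA, ZPlus, Stor.tv]

lemma ZA_step_true_false (x : ℕ) :
    Stor.step ZPlus ZA (true, x) false =
      (if x = 0 then none else some (true, x - 1)) := by
  by_cases h : x = 0 <;> simp [Stor.step, ZA, ZPlus, Stor.tv, h]

/-- Acceptance from state `true` (the popping state). -/
lemma ZA_acc1 : ∀ (w : List Bool) (x : ℕ),
    (∃ c : Bool × ℕ, Stor.runWord ZPlus ZA (true, x) w = some c ∧
        ZA.final c.1 (Stor.tv ZPlus c.2) = true) ↔ w = List.replicate x false := by
  intro w
  induction w with
  | nil =>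
      intro x
      constructor
      · rintro ⟨c, hc, hfin⟩
        simp [Stor.runWord] at hc
        subst hc
        simp [ZA, ZPlus, Stor.tv] at hfin
        simp [hfin]
      · intro h
        have hx : x = 0 := by
          have := congrArg List.length h
          simp at this
          omega
        refine ⟨(true, x), by simp [Stor.runWord], ?_⟩
        simp [ZA, ZPlus, Stor.tv, hx]
  | cons γ w ih =>
      intro x
      cases γ with
      | true =>
          constructor
          · rintro ⟨c, hc, -⟩
            simp [Stor.runWord, ZA_step_true_true] at hc
          · intro h
            exfalso
            cases x with
            | zero => simp at h
            | succ k => simp [List.replicate_succ] at h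
      | false =>
          cases x with
          | zero =>
              constructor
              · rintro ⟨c, hc, -⟩
                simp [Stor.runWord, ZA_step_true_false] at hc
              · intro h; simp at h
          | succ k =>
              constructor
              · rintro ⟨c, hc, hfin⟩
                simp [Stor.runWord, ZA_step_true_false] at hc
                have := (ih k).mp ⟨c, hc, hfin⟩
                simp [List.replicate_succ, this]
              · intro h
                simp [List.replicate_succ] at h
                rcases (ih k).mpr h with ⟨c, hc, hfin⟩
                exact ⟨c, by simp [Stor.runWord, ZA_step_true_false, hc], hfin⟩

/-- Acceptance from state `false` (the pushing state). -/
lemma ZA_acc0 : ∀ (w : List Bool) (x : ℕ),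
    (∃ c : Bool × ℕ, Stor.runWord ZPlus ZA (false, x) w = some c ∧
        ZA.final c.1 (Stor.tv ZPlus c.2) = true) ↔
      ∃ n : ℕ, w = List.replicate n true ++ List.replicate (x + n) false := by
  intro w
  induction w with
  | nil =>
      intro x
      constructor
      · rintro ⟨c, hc, hfin⟩
        simp [Stor.runWord] at hc
        subst hc
        simp [ZA, ZPlus, Stor.tv] at hfin
        exact ⟨0, by simp [hfin]⟩
      · rintro ⟨n, hn⟩
        have hx : x = 0 := by
          have := congrArg List.length hn
          simp at this
          omega
        refine ⟨(false, x), by simp [Stor.runWord], ?_⟩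
        simp [ZA, ZPlus, Stor.tv, hx]
  | cons γ w ih =>
      intro x
      cases γ with
      | true =>
          constructor
          · rintro ⟨c, hc, hfin⟩
            simp [Stor.runWord, ZA_step_false_true] at hc
            rcases (ih (x + 1)).mp ⟨c, hc, hfin⟩ with ⟨n, hn⟩
            exact ⟨n + 1, by simp [List.replicate_succ, hn]; ring_nf⟩
          · rintro ⟨n, hn⟩
            cases n with
            | zero =>
                exfalso
                cases hx : x + 0 with
                | zero => rw [hx] at hn; simp at hn
                | succ k => rw [hx] at hn; simp [List.replicate_succ] at hn
            | succ m =>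
                simp [List.replicate_succ] at hn
                have : w = List.replicate m true ++ List.replicate ((x + 1) + m) false := by
                  rw [hn]; ring_nf
                rcases (ih (x + 1)).mpr ⟨m, this⟩ with ⟨c, hc, hfin⟩
                exact ⟨c, by simp [Stor.runWord, ZA_step_false_true, hc], hfin⟩
      | false =>
          cases x with
          | zero =>
              constructor
              · rintro ⟨c, hc, -⟩
                simp [Stor.runWord, ZA_step_false_false] at hc
              · rintro ⟨n, hn⟩
                exfalso
                cases n with
                | zero => simp at hn
                | succ m => simp [List.replicate_succ] at hn
          | succ k =>
              constructor
              · rintro ⟨c, hc, hfin⟩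
                simp [Stor.runWord, ZA_step_false_false] at hc
                have := (ZA_acc1 w k).mp ⟨c, hc, hfin⟩
                exact ⟨0, by simp [List.replicate_succ, this]⟩
              · rintro ⟨n, hn⟩
                have hn0 : n = 0 := by
                  cases n with
                  | zero => rfl
                  | succ m => exfalso; simp [List.replicate_succ] at hn
                subst hn0
                simp [List.replicate_succ] at hn
                rcases (ZA_acc1 w k).mpr hn with ⟨c, hc, hfin⟩
                exact ⟨c, by simp [Stor.runWord, ZA_step_false_false, hc], hfin⟩

lemma rep_eq_iff {n m k : ℕ}
    (h : List.replicate n true ++ List.replicate m false =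
         List.replicate k true ++ List.replicate k false) : n = k ∧ m = k := by
  have h1 := congrArg (List.count true) h
  have h2 := congrArg (List.count false) h
  simp [List.count_append, List.count_replicate] at h1 h2
  exact ⟨h1, h2⟩

/-- `Z+` cannot be deterministically simulated by any
test-free storage type: there is a deterministic `Z+`-automaton recognizing
`{aⁿbⁿ : n ∈ ℕ}` (with `a = true`, `b = false`), but for every test-free
storage type `S` no deterministic `S`-automaton recognizes this language
(in particular the test-free storages `C^k(C)` and `C^k_inv(C)` do not
simulate `Z+`). -/
theorem zplus_not_simulated_by_testfree :
    (∃ (Q : Type) (_ : Fintype Q) (A : Stor.DAut ℕ Unit (Fin 3) Q Bool),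
      Stor.LangOf ZPlus A =
        { w : List Bool | ∃ n : ℕ,
          w = List.replicate n true ++ List.replicate n false }) ∧
    (∀ (X T F Q : Type), Fintype T → Fintype F → Fintype Q →
      ∀ (S : Stor.StorageType X T F), Stor.TestFree S →
      ∀ A : Stor.DAut X T F Q Bool,
        Stor.LangOf S A ≠
          { w : List Bool | ∃ n : ℕ,
            w = List.replicate n true ++ List.replicate n false }) := by
  constructor
  · -- Part 1: the Z+ automaton `ZA` recognizes {aⁿbⁿ}.
    refine ⟨Bool, inferInstance, ZA, ?_⟩
    ext w
    simp only [Stor.LangOf, Set.mem_setOf_eq]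
    have := ZA_acc0 w 0
    simp only [ZA, zero_add] at this ⊢
    exact this
  · -- Part 2: no test-free storage type recognizes {aⁿbⁿ}.
    intro X T F Q _ _ instQ S hTF A hEq
    haveI : Fintype Q := instQ
    have hmem : ∀ n : ℕ,
        (List.replicate n true ++ List.replicate n false) ∈ Stor.LangOf S A := by
      intro n; rw [hEq]; exact ⟨n, rfl⟩
    have hsplit : ∀ n : ℕ, ∃ (d c : Q × X),
        Stor.runWord S A (A.q0, S.x0) (List.replicate n true) = some d ∧
        Stor.runWord S A d (List.replicate n false) = some c ∧
        A.final c.1 (Stor.tv S c.2) = true := by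
      intro n
      rcases hmem n with ⟨c, hrun, hfin⟩
      rw [Stor.runWord_append] at hrun
      rcases Option.bind_eq_some_iff.mp hrun with ⟨d, hd, hc⟩
      exact ⟨d, c, hd, hc, hfin⟩
    choose d c hd hc hfin using hsplit
    -- pigeonhole on the state after reading the a-block
    obtain ⟨i, j, hij, hst⟩ :
        ∃ i j : Fin (Fintype.card Q + 1), i ≠ j ∧ (d i).1 = (d j).1 :=
      Fintype.exists_ne_map_eq_of_card_lt (fun i : Fin (Fintype.card Q + 1) => (d i).1)
        (by simp)
    -- wlog m < n with equal states
    obtain ⟨m, n, hmn, hsteq⟩ : ∃ m n : ℕ, m < n ∧ (d m).1 = (d n).1 := by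
      rcases lt_or_gt_of_ne (Fin.val_ne_of_ne hij) with h | h
      · exact ⟨i, j, h, hst⟩
      · exact ⟨j, i, h, hst.symm⟩
    -- the word aⁿbᵐ is accepted, contradiction
    have hbad : (List.replicate n true ++ List.replicate m false) ∈ Stor.LangOf S A := by
      -- run on the prefix of b's of the accepting run of aⁿbⁿ
      have hsplitb : List.replicate n false =
          List.replicate m false ++ List.replicate (n - m) false := by
        rw [← List.replicate_add]; congr 1; omega
      have hcn := hc n
      rw [hsplitb, Stor.runWord_append] at hcn
      rcases Option.bind_eq_some_iff.mp hcn with ⟨e, he, -⟩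
      -- same projected state as the accepting run of aᵐbᵐ after its b-block
      have hproj1 : Stor.runB S A (d n).1 (List.replicate m false) = some e.1 :=
        Stor.run_proj S A hTF _ (d n).1 (d n).2 e (by rw [Prod.mk.eta]; exact he)
      have hproj2 : Stor.runB S A (d m).1 (List.replicate m false) = some (c m).1 :=
        Stor.run_proj S A hTF _ (d m).1 (d m).2 (c m) (by rw [Prod.mk.eta]; exact hc m)
      rw [hsteq] at hproj2
      have hstate : e.1 = (c m).1 := by
        rw [hproj1] at hproj2; exact Option.some_inj.mp hproj2
      have htv : Stor.tv S e.2 = Stor.tv S (c m).2 :=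
        funext fun t => hTF t e.2 (c m).2
      refine ⟨e, ?_, ?_⟩
      · rw [Stor.runWord_append, hd n]
        simpa using he
      · rw [hstate, htv]; exact hfin m
    rw [hEq] at hbad
    rcases hbad with ⟨k, hk⟩
    rcases rep_eq_iff hk with ⟨h1, h2⟩
    omega
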